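/- Let 𝓐 be a finite arrangement of subsets of a set Ω, let L(𝓐) be the poset (under inclusion) of all non-empty intersections of members of 𝓐 together with Ω itself, with Möbius function μ, and let ν be a valuation defined on a relative Boolean algebra containing all members of L(𝓐). Then the indicator function of the complement Ω − ⋃_{A∈𝓐} A equals ∑_{X ∈ L(𝓐)} μ(X,Ω)·1_X, and consequently ν(Ω − ⋃_{A∈𝓐} A) = ∑_{X ∈ L(𝓐)} μ(X,Ω) ν(X). -/

import Mathlib

/-- A valuation (finitely additive set function) on a class `B` of subsets. -/
def IsValuation {α R : Type} [CommRing R] (B : Set (Set α)) (ν : Set α → R) : Prop :=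
  ν ∅ = 0 ∧ ∀ X ∈ B, ∀ Y ∈ B, ν (X ∪ Y) + ν (X ∩ Y) = ν X + ν Y

open Classical in
/-- Let `𝓐` be a finite arrangement of proper subsets of `Ω`, `L` its semilattice
of non-empty intersections together with `Ω` itself, and `μ X = μ(X, Ω)` the
Möbius function of the poset `L` (characterized by the defining recursion).
Then the indicator of the complement `Ω \ ⋃ 𝓐` equals `∑_{X ∈ L} μ(X,Ω) 1_X`,
and consequently any valuation `ν` defined on a relative Boolean algebra `𝓑`
containing `L` and the members of `𝓐` satisfies
`ν(Ω \ ⋃ 𝓐) = ∑_{X ∈ L} μ(X,Ω) ν(X)`. -/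
theorem stmt6 {Ω R : Type} [CommRing R] (𝓐 : Finset (Set Ω))
    (hproper : ∀ A ∈ 𝓐, A ≠ Set.univ)
    (L : Finset (Set Ω))
    (hLdef : ∀ X : Set Ω, X ∈ L ↔
      (X = Set.univ ∨ ∃ S ⊆ 𝓐, S.Nonempty ∧ X = ⋂₀ (↑S : Set (Set Ω)) ∧ X.Nonempty))
    (μ : Set Ω → ℤ)
    (hμ : ∀ X ∈ L, (∑ Z ∈ L.filter (fun Z => X ⊆ Z), μ Z) =
      if X = Set.univ then 1 else 0)
    (𝓑 : Set (Set Ω))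
    (h𝓑univ : Set.univ ∈ 𝓑)
    (h𝓑L : ∀ X ∈ L, X ∈ 𝓑) (h𝓑A : ∀ A ∈ 𝓐, A ∈ 𝓑)
    (h𝓑inter : ∀ X ∈ 𝓑, ∀ Y ∈ 𝓑, X ∩ Y ∈ 𝓑)
    (h𝓑union : ∀ X ∈ 𝓑, ∀ Y ∈ 𝓑, X ∪ Y ∈ 𝓑)
    (h𝓑sdiff : ∀ X ∈ 𝓑, ∀ Y ∈ 𝓑, X \ Y ∈ 𝓑)
    (ν : Set Ω → R) (hν : IsValuation 𝓑 ν) :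
    (∀ ω : Ω,
      (if ω ∈ Set.univ \ ⋃ A ∈ 𝓐, A then (1 : ℤ) else 0) =
        ∑ X ∈ L, μ X * (if ω ∈ X then 1 else 0)) ∧
    ν (Set.univ \ ⋃ A ∈ 𝓐, A) = ∑ X ∈ L, (μ X : R) * ν X := by
  classical
  have part1 : ∀ ω : Ω,
      (if ω ∈ Set.univ \ ⋃ A ∈ 𝓐, A then (1 : ℤ) else 0) =
        ∑ X ∈ L, μ X * (if ω ∈ X then 1 else 0) := by
    intro ω
    set S : Finset (Set Ω) := 𝓐.filter (fun A => ω ∈ A) with hS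
    set M : Set Ω := if S = ∅ then Set.univ else ⋂₀ (↑S : Set (Set Ω)) with hM
    have hωM : ω ∈ M := by
      by_cases h : S = ∅
      · simp [hM, h]
      · simp only [hM, if_neg h, Set.mem_sInter]
        intro A hA
        exact (Finset.mem_filter.mp (Finset.mem_coe.mp hA)).2
    have hML : M ∈ L := by
      rw [hLdef]
      by_cases h : S = ∅
      · left; simp [hM, h]
      · right
        exact ⟨S, Finset.filter_subset _ _, Finset.nonempty_of_ne_empty h,
          by simp [hM, if_neg h], ⟨ω, hωM⟩⟩
    have hiff : ∀ X ∈ L, (ω ∈ X ↔ M ⊆ X) := by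
      intro X hX
      constructor
      · intro hωX
        rcases (hLdef X).mp hX with rfl | ⟨S', hS'sub, hS'ne, rfl, hne⟩
        · exact fun _ _ => trivial
        · have hsub : S' ⊆ S := by
            intro A hA
            exact Finset.mem_filter.mpr
              ⟨hS'sub hA, Set.mem_sInter.mp hωX A (Finset.mem_coe.mpr hA)⟩
          have hSne : S ≠ ∅ := by
            intro h
            obtain ⟨A, hA⟩ := hS'ne
            exact absurd (hsub hA) (by simp [h])
          simp only [hM, if_neg hSne]
          intro x hx
          exact Set.mem_sInter.mpr fun A hA =>
            Set.mem_sInter.mp hx A (Finset.mem_coe.mpr (hsub (Finset.mem_coe.mp hA)))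
      · intro h; exact h hωM
    have hMuniv : (M = Set.univ) ↔ ω ∈ Set.univ \ ⋃ A ∈ 𝓐, A := by
      constructor
      · intro h
        refine ⟨trivial, ?_⟩
        simp only [Set.mem_iUnion, exists_prop, not_exists, not_and]
        intro A hA hωA
        have hAS : A ∈ S := Finset.mem_filter.mpr ⟨hA, hωA⟩
        have hSne : S ≠ ∅ := Finset.ne_empty_of_mem hAS
        have hMA : M ⊆ A := by
          simp only [hM, if_neg hSne]
          intro x hx
          exact Set.mem_sInter.mp hx A (Finset.mem_coe.mpr hAS)
        rw [h] at hMA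
        exact hproper A hA (Set.eq_univ_of_univ_subset hMA)
      · intro h
        have hSe : S = ∅ := by
          apply Finset.filter_eq_empty_iff.mpr
          intro A hA hωA
          have h2 := h.2
          simp only [Set.mem_iUnion, exists_prop, not_exists, not_and] at h2
          exact h2 A hA hωA
        simp [hM, hSe]
    calc (if ω ∈ Set.univ \ ⋃ A ∈ 𝓐, A then (1 : ℤ) else 0)
        = (if M = Set.univ then (1 : ℤ) else 0) := by
          by_cases h : M = Set.univ
          · rw [if_pos h, if_pos (hMuniv.mp h)]
          · rw [if_neg h, if_neg (fun hc => h (hMuniv.mpr hc))]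
      _ = ∑ Z ∈ L.filter (fun Z => M ⊆ Z), μ Z := (hμ M hML).symm
      _ = ∑ X ∈ L, μ X * (if ω ∈ X then 1 else 0) := by
          rw [Finset.sum_filter]
          refine Finset.sum_congr rfl fun X hX => ?_
          by_cases h : ω ∈ X
          · rw [if_pos ((hiff X hX).mp h), if_pos h, mul_one]
          · rw [if_neg (fun hc => h (hc hωM)), if_neg h, mul_zero]
  refine ⟨part1, ?_⟩
  set C : Set Ω := Set.univ \ ⋃ A ∈ 𝓐, A with hC
  set atom : Finset (Set Ω) → Set Ω := fun T => {x | ∀ A ∈ 𝓐, (x ∈ A ↔ A ∈ T)} with hatom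
  have h𝓑empty : (∅ : Set Ω) ∈ 𝓑 := by
    have := h𝓑sdiff _ h𝓑univ _ h𝓑univ
    simpa using this
  have hInterB : ∀ S : Finset (Set Ω), S ⊆ 𝓐 → (⋂ A ∈ S, A) ∈ 𝓑 := by
    intro S
    induction S using Finset.induction_on with
    | empty => intro _; simpa using h𝓑univ
    | @insert A S hA ih =>
      intro hsub
      rw [Finset.set_biInter_insert]
      exact h𝓑inter _ (h𝓑A _ (hsub (Finset.mem_insert_self _ _)))
        _ (ih (fun x hx => hsub (Finset.mem_insert_of_mem hx)))
  have hUnionB : ∀ S : Finset (Set Ω), S ⊆ 𝓐 → (⋃ A ∈ S, A) ∈ 𝓑 := by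
    intro S
    induction S using Finset.induction_on with
    | empty => intro _; simpa using h𝓑empty
    | @insert A S hA ih =>
      intro hsub
      rw [Finset.set_biUnion_insert]
      exact h𝓑union _ (h𝓑A _ (hsub (Finset.mem_insert_self _ _)))
        _ (ih (fun x hx => hsub (Finset.mem_insert_of_mem hx)))
  have hatomB : ∀ T ∈ 𝓐.powerset, atom T ∈ 𝓑 := by
    intro T hT
    rw [Finset.mem_powerset] at hT
    have heq : atom T = (⋂ A ∈ T, A) \ ⋃ A ∈ (𝓐 \ T), A := by
      ext x
      simp only [hatom, Set.mem_setOf_eq, Set.mem_diff, Set.mem_iInter, Set.mem_iUnion,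
        Finset.mem_sdiff, not_exists, exists_prop, not_and]
      constructor
      · intro h
        refine ⟨fun A hA => (h A (hT hA)).mpr hA, ?_⟩
        intro A hA hx
        exact hA.2 ((h A hA.1).mp hx)
      · rintro ⟨h1, h2⟩ A hA
        constructor
        · intro hx
          by_contra hAT
          exact h2 A ⟨hA, hAT⟩ hx
        · exact h1 A
    rw [heq]
    exact h𝓑sdiff _ (hInterB T hT) _ (hUnionB _ (Finset.sdiff_subset))
  have hdisjoint : ∀ T ∈ 𝓐.powerset, ∀ T' ∈ 𝓐.powerset, T ≠ T' → atom T ∩ atom T' = ∅ := by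
    intro T hT T' hT' hne
    rw [Finset.mem_powerset] at hT hT'
    by_contra h
    obtain ⟨x, hx1, hx2⟩ := Set.nonempty_iff_ne_empty.mpr h
    simp only [hatom, Set.mem_setOf_eq] at hx1 hx2
    apply hne
    ext A
    constructor
    · intro hA
      exact (hx2 A (hT hA)).mp ((hx1 A (hT hA)).mpr hA)
    · intro hA
      exact (hx1 A (hT' hA)).mp ((hx2 A (hT' hA)).mpr hA)
  have hadd : ∀ s : Finset (Finset (Set Ω)), s ⊆ 𝓐.powerset →
      (⋃ T ∈ s, atom T) ∈ 𝓑 ∧ ν (⋃ T ∈ s, atom T) = ∑ T ∈ s, ν (atom T) := by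
    intro s
    induction s using Finset.induction_on with
    | empty =>
      intro _
      constructor
      · simpa using h𝓑empty
      · simp [hν.1]
    | @insert T s hT ih =>
      intro hsub
      have hsub' : s ⊆ 𝓐.powerset := fun x hx => hsub (Finset.mem_insert_of_mem hx)
      obtain ⟨ihB, ihν⟩ := ih hsub'
      have hTB : atom T ∈ 𝓑 := hatomB T (hsub (Finset.mem_insert_self _ _))
      rw [Finset.set_biUnion_insert]
      refine ⟨h𝓑union _ hTB _ ihB, ?_⟩
      have hd : atom T ∩ ⋃ T' ∈ s, atom T' = ∅ := by
        ext x
        simp only [Set.mem_inter_iff, Set.mem_iUnion, Set.mem_empty_iff_false, iff_false,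
          not_and, not_exists, exists_prop]
        rintro hx1 T' hT' hx2
        have hne : T ≠ T' := fun h => hT (h ▸ hT')
        exact Set.eq_empty_iff_forall_notMem.mp
          (hdisjoint T (hsub (Finset.mem_insert_self _ _)) T' (hsub' hT') hne) x ⟨hx1, hx2⟩
      have hval := hν.2 _ hTB _ ihB
      rw [hd, hν.1, add_zero] at hval
      rw [Finset.sum_insert hT, ← ihν, hval]
  have hνY : ∀ Y : Set Ω, (∀ x y : Ω, (∀ A ∈ 𝓐, (x ∈ A ↔ y ∈ A)) → (x ∈ Y → y ∈ Y)) →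
      ν Y = ∑ T ∈ 𝓐.powerset, if atom T ⊆ Y then ν (atom T) else 0 := by
    intro Y hinv
    have hYeq : Y = ⋃ T ∈ 𝓐.powerset.filter (fun T => atom T ⊆ Y), atom T := by
      ext x
      simp only [Set.mem_iUnion, Finset.mem_filter, Finset.mem_powerset, exists_prop]
      constructor
      · intro hx
        refine ⟨𝓐.filter (fun A => x ∈ A), ⟨⟨Finset.filter_subset _ _, ?_⟩, ?_⟩⟩
        · intro y hy
          simp only [hatom, Set.mem_setOf_eq] at hy
          apply hinv x y ?_ hx
          intro A hA
          rw [hy A hA, Finset.mem_filter]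
          simp [hA]
        · simp only [hatom, Set.mem_setOf_eq]
          intro A hA
          simp [Finset.mem_filter, hA]
      · rintro ⟨T, ⟨hTsub, hTY⟩, hx⟩
        exact hTY hx
    calc ν Y = ν (⋃ T ∈ 𝓐.powerset.filter (fun T => atom T ⊆ Y), atom T) := by rw [← hYeq]
      _ = ∑ T ∈ 𝓐.powerset.filter (fun T => atom T ⊆ Y), ν (atom T) :=
          (hadd _ (Finset.filter_subset _ _)).2
      _ = ∑ T ∈ 𝓐.powerset, if atom T ⊆ Y then ν (atom T) else 0 := Finset.sum_filter _ _
  have hCinv : ∀ x y : Ω, (∀ A ∈ 𝓐, (x ∈ A ↔ y ∈ A)) → (x ∈ C → y ∈ C) := by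
    intro x y h hx
    refine ⟨trivial, ?_⟩
    simp only [Set.mem_iUnion, exists_prop, not_exists, not_and]
    intro A hA hyA
    have hx2 := hx.2
    simp only [Set.mem_iUnion, exists_prop, not_exists, not_and] at hx2
    exact hx2 A hA ((h A hA).mpr hyA)
  have hXinv : ∀ X ∈ L, ∀ x y : Ω, (∀ A ∈ 𝓐, (x ∈ A ↔ y ∈ A)) → (x ∈ X → y ∈ X) := by
    intro X hX x y h hx
    rcases (hLdef X).mp hX with rfl | ⟨S', hsub, hne, rfl, hXne⟩
    · trivial
    · exact Set.mem_sInter.mpr fun A hA =>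
        (h A (hsub (Finset.mem_coe.mp hA))).mp (Set.mem_sInter.mp hx A hA)
  have hCsum : ν C = ∑ T ∈ 𝓐.powerset, if atom T ⊆ C then ν (atom T) else 0 := hνY C hCinv
  rw [hCsum]
  rw [show (∑ X ∈ L, (μ X : R) * ν X) =
      ∑ X ∈ L, ∑ T ∈ 𝓐.powerset, (μ X : R) * (if atom T ⊆ X then ν (atom T) else 0) from
    Finset.sum_congr rfl (fun X hX => by rw [hνY X (hXinv X hX), Finset.mul_sum])]
  rw [Finset.sum_comm]
  refine (Finset.sum_congr rfl fun T hT => ?_).symm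
  by_cases he : atom T = ∅
  · simp [he, hν.1]
  · obtain ⟨ω, hω⟩ := Set.nonempty_iff_ne_empty.mpr he
    have hmem : ∀ X : Set Ω, (∀ x y : Ω, (∀ A ∈ 𝓐, (x ∈ A ↔ y ∈ A)) → (x ∈ X → y ∈ X)) →
        (atom T ⊆ X ↔ ω ∈ X) := by
      intro X hinv
      constructor
      · intro h
        exact h hω
      · intro h y hy
        apply hinv ω y ?_ h
        intro A hA
        have hω' := hω
        simp only [hatom, Set.mem_setOf_eq] at hω' hy
        exact (hω' A hA).trans (hy A hA).symm
    have h1 := part1 ω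
    have key : (∑ X ∈ L, (μ X : R) * (if ω ∈ X then 1 else 0)) =
        (if ω ∈ C then (1 : R) else 0) := by
      have h2 := congrArg (fun z : ℤ => (z : R)) h1
      simp only [Int.cast_sum, Int.cast_mul, apply_ite (fun z : ℤ => (z : R)),
        Int.cast_one, Int.cast_zero] at h2
      exact h2.symm
    calc ∑ X ∈ L, (μ X : R) * (if atom T ⊆ X then ν (atom T) else 0)
        = ∑ X ∈ L, ((μ X : R) * (if ω ∈ X then 1 else 0)) * ν (atom T) := by
          refine Finset.sum_congr rfl fun X hX => ?_
          rw [hmem X (hXinv X hX)]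
          by_cases h : ω ∈ X <;> simp [h, mul_assoc]
      _ = (∑ X ∈ L, (μ X : R) * (if ω ∈ X then 1 else 0)) * ν (atom T) := by
          rw [Finset.sum_mul]
      _ = (if ω ∈ C then (1 : R) else 0) * ν (atom T) := by rw [key]
      _ = (if atom T ⊆ C then ν (atom T) else 0) := by
          rw [hmem C hCinv]
          by_cases h : ω ∈ C <;> simp [h]
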